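/- For a bounded linear operator A on a complex Banach space, if asc(A - λ) < ∞ then A has the single-valued extension property (SVEP) at λ. -/

import Mathlib

open Filter Metric Set Asymptotics Topology

namespace Paper

variable {X : Type*} [NormedAddCommGroup X] [NormedSpace ℂ X] [CompleteSpace X]

/-- The ascent of an operator: the least `n` with `ker Tⁿ = ker Tⁿ⁺¹`, `⊤` if none exists. -/
noncomputable def ascent (T : X →L[ℂ] X) : ℕ∞ :=
  sInf ((↑) '' {n : ℕ | LinearMap.ker (↑(T ^ n) : X →ₗ[ℂ] X) = LinearMap.ker (↑(T ^ (n + 1)) : X →ₗ[ℂ] X)})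

/-- The descent of an operator: the least `n` with `range Tⁿ = range Tⁿ⁺¹`, `⊤` if none exists. -/
noncomputable def descent (T : X →L[ℂ] X) : ℕ∞ :=
  sInf ((↑) '' {n : ℕ | LinearMap.range (↑(T ^ n) : X →ₗ[ℂ] X) = LinearMap.range (↑(T ^ (n + 1)) : X →ₗ[ℂ] X)})

/-- `T` has the single-valued extension property at `z₀`. -/
def HasSVEPAt (T : X →L[ℂ] X) (z₀ : ℂ) : Prop :=
  ∀ r > (0 : ℝ), ∀ f : ℂ → X, AnalyticOnNhd ℂ f (ball z₀ r) →
    (∀ z ∈ ball z₀ r, T (f z) - z • f z = 0) → ∀ z ∈ ball z₀ r, f z = 0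

/-- The approximate point spectrum: points where `T - z` is not bounded below. -/
def aspectrum (T : X →L[ℂ] X) : Set ℂ :=
  {z | ¬ ∃ c > (0 : ℝ), ∀ x : X, c * ‖x‖ ≤ ‖(T - z • 1) x‖}

/-- The isolated points of a set `S ⊆ ℂ`. -/
def iso (S : Set ℂ) : Set ℂ := {z ∈ S | 𝓝[S \ {z}] z = ⊥}

/-- The set `Π(T)` of poles of the resolvent of `T`. -/
noncomputable def poles (T : X →L[ℂ] X) : Set ℂ :=
  {z ∈ spectrum ℂ T | ascent (T - z • 1) = descent (T - z • 1) ∧ ascent (T - z • 1) ≠ ⊤}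

/-- The set `Π^a(T)` of left poles of `T`. -/
noncomputable def leftPoles (T : X →L[ℂ] X) : Set ℂ :=
  {z ∈ aspectrum T | ∃ d : ℕ, ascent (T - z • 1) = (d : ℕ∞) ∧
    IsClosed ((LinearMap.range (↑((T - z • 1) ^ (d + 1)) : X →ₗ[ℂ] X) : Submodule ℂ X) : Set X)}

/-- `E(T)`: eigenvalues of `T` which are isolated points of the spectrum. -/
def eigE (T : X →L[ℂ] X) : Set ℂ :=
  {z ∈ iso (spectrum ℂ T) | ∃ x : X, x ≠ 0 ∧ T x = z • x}

/-- `E^a(T)`: eigenvalues of `T` which are isolated points of the approximate point spectrum. -/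
def eigEa (T : X →L[ℂ] X) : Set ℂ :=
  {z ∈ iso (aspectrum T) | ∃ x : X, x ≠ 0 ∧ T x = z • x}

/-- Fredholm operator. -/
def IsFredholm (T : X →L[ℂ] X) : Prop :=
  FiniteDimensional ℂ (LinearMap.ker (T : X →ₗ[ℂ] X)) ∧
  IsClosed ((LinearMap.range (T : X →ₗ[ℂ] X) : Submodule ℂ X) : Set X) ∧
  FiniteDimensional ℂ (X ⧸ (LinearMap.range (T : X →ₗ[ℂ] X) : Submodule ℂ X))

/-- The Fredholm index `α(T) - β(T)`. -/
noncomputable def fredIndex (T : X →L[ℂ] X) : ℤ :=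
  (Module.finrank ℂ (LinearMap.ker (T : X →ₗ[ℂ] X)) : ℤ) -
    (Module.finrank ℂ (X ⧸ (LinearMap.range (T : X →ₗ[ℂ] X) : Submodule ℂ X)) : ℤ)

/-- The Weyl spectrum `σ_w(T)`. -/
noncomputable def weylSpec (T : X →L[ℂ] X) : Set ℂ :=
  {z ∈ spectrum ℂ T | ¬ (IsFredholm (T - z • 1) ∧ fredIndex (T - z • 1) = 0)}

/-- Upper semi-Fredholm operator. -/
def IsUpperSemiFredholm (T : X →L[ℂ] X) : Prop :=
  FiniteDimensional ℂ (LinearMap.ker (T : X →ₗ[ℂ] X)) ∧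
  IsClosed ((LinearMap.range (T : X →ₗ[ℂ] X) : Submodule ℂ X) : Set X)

/-- `ind T ≤ 0`, allowing an infinite-dimensional cokernel. -/
def indexLE0 (T : X →L[ℂ] X) : Prop :=
  (Module.finrank ℂ (LinearMap.ker (T : X →ₗ[ℂ] X)) : Cardinal) ≤
    Module.rank ℂ (X ⧸ (LinearMap.range (T : X →ₗ[ℂ] X) : Submodule ℂ X))

/-- The approximate (left) Weyl spectrum `σ_aw(T)`. -/
noncomputable def aweylSpec (T : X →L[ℂ] X) : Set ℂ :=
  {z ∈ aspectrum T | ¬ (IsUpperSemiFredholm (T - z • 1) ∧ indexLE0 (T - z • 1))}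

/-- The restriction of `T` to the invariant subspace `range (Tⁿ)`. -/
noncomputable def restr (T : X →L[ℂ] X) (n : ℕ) :
    (LinearMap.range (↑(T ^ n) : X →ₗ[ℂ] X) : Submodule ℂ X) →ₗ[ℂ] (LinearMap.range (↑(T ^ n) : X →ₗ[ℂ] X) : Submodule ℂ X) :=
  (T : X →ₗ[ℂ] X).restrict (fun x hx => by
    obtain ⟨y, hy⟩ := hx
    refine LinearMap.mem_range.mpr ⟨T y, ?_⟩
    have h : (T ^ n) * T = T * (T ^ n) := ((Commute.refl T).pow_left n).eq
    calc (T ^ n) (T y) = ((T ^ n) * T) y := rfl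
      _ = (T * T ^ n) y := by rw [h]
      _ = T ((T ^ n) y) := rfl
      _ = T x := congrArg T hy)

/-- `T` is B-Weyl: for some `n`, `range (Tⁿ)` is closed and the restriction of `T` to it is
Fredholm of index `0`. -/
noncomputable def IsBWeyl (T : X →L[ℂ] X) : Prop :=
  ∃ n : ℕ, IsClosed ((LinearMap.range (↑(T ^ n) : X →ₗ[ℂ] X) : Submodule ℂ X) : Set X) ∧
    FiniteDimensional ℂ (LinearMap.ker (restr T n)) ∧
    IsClosed ((LinearMap.range (restr T n) :
        Submodule ℂ (LinearMap.range (↑(T ^ n) : X →ₗ[ℂ] X) : Submodule ℂ X)) :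
      Set (LinearMap.range (↑(T ^ n) : X →ₗ[ℂ] X) : Submodule ℂ X)) ∧
    FiniteDimensional ℂ
      ((LinearMap.range (↑(T ^ n) : X →ₗ[ℂ] X) : Submodule ℂ X) ⧸ LinearMap.range (restr T n)) ∧
    Module.finrank ℂ (LinearMap.ker (restr T n)) =
      Module.finrank ℂ ((LinearMap.range (↑(T ^ n) : X →ₗ[ℂ] X) : Submodule ℂ X) ⧸ LinearMap.range (restr T n))

/-- `T` is upper B-Weyl: for some `n`, `range (Tⁿ)` is closed and the restriction of `T` to it is
upper semi-Fredholm of index `≤ 0`. -/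
noncomputable def IsUpperBWeyl (T : X →L[ℂ] X) : Prop :=
  ∃ n : ℕ, IsClosed ((LinearMap.range (↑(T ^ n) : X →ₗ[ℂ] X) : Submodule ℂ X) : Set X) ∧
    FiniteDimensional ℂ (LinearMap.ker (restr T n)) ∧
    IsClosed ((LinearMap.range (restr T n) :
        Submodule ℂ (LinearMap.range (↑(T ^ n) : X →ₗ[ℂ] X) : Submodule ℂ X)) :
      Set (LinearMap.range (↑(T ^ n) : X →ₗ[ℂ] X) : Submodule ℂ X)) ∧
    (Module.finrank ℂ (LinearMap.ker (restr T n)) : Cardinal) ≤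
      Module.rank ℂ ((LinearMap.range (↑(T ^ n) : X →ₗ[ℂ] X) : Submodule ℂ X) ⧸ LinearMap.range (restr T n))

/-- The B-Weyl spectrum `σ_Bw(T)`. -/
noncomputable def bweylSpec (T : X →L[ℂ] X) : Set ℂ :=
  {z ∈ spectrum ℂ T | ¬ IsBWeyl (T - z • 1)}

/-- The upper B-Weyl spectrum `σ_uBw(T)`. -/
noncomputable def ubweylSpec (T : X →L[ℂ] X) : Set ℂ :=
  {z ∈ aspectrum T | ¬ IsUpperBWeyl (T - z • 1)}

/-- `Φ^iso_Bw(T) = iso σ_w(T) ∩ σ_Bw(T)ᶜ`. -/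
noncomputable def phiIsoBw (T : X →L[ℂ] X) : Set ℂ := iso (weylSpec T) ∩ (bweylSpec T)ᶜ

/-- `Φ^iso_uBw(T) = iso σ_aw(T) ∩ σ_uBw(T)ᶜ`. -/
noncomputable def phiIsoUBw (T : X →L[ℂ] X) : Set ℂ := iso (aweylSpec T) ∩ (ubweylSpec T)ᶜ

/-- `T` is polaroid: isolated spectral points are poles. -/
noncomputable def Polaroid (T : X →L[ℂ] X) : Prop := iso (spectrum ℂ T) ⊆ poles T

/-- `T` is left polaroid: isolated points of `σ_a(T)` are left poles. -/
noncomputable def LeftPolaroid (T : X →L[ℂ] X) : Prop := iso (aspectrum T) ⊆ leftPoles T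

/-- `T` is a-polaroid: isolated points of `σ_a(T)` are poles. -/
noncomputable def APolaroid (T : X →L[ℂ] X) : Prop := iso (aspectrum T) ⊆ poles T

/-- Property `(P1)`: `E(T) = Π^a(T)`. -/
noncomputable def P1 (T : X →L[ℂ] X) : Prop := eigE T = leftPoles T

/-- Property `(P2)`: `E^a(T) = Π(T)`. -/
noncomputable def P2 (T : X →L[ℂ] X) : Prop := eigEa T = poles T

/-- The resolvent of `T` has a pole (finite-order singularity) at `z₀`. -/
noncomputable def HasResolventPoleAt (T : X →L[ℂ] X) (z₀ : ℂ) : Prop :=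
  z₀ ∈ iso (spectrum ℂ T) ∧ ∃ n : ℕ, 0 < n ∧
    (fun z => (z - z₀) ^ n • resolvent T z) =O[𝓝[≠] z₀] (fun _ => (1 : ℝ))

/-- A holomorphic (Riesz) functional calculus for `T` on an open neighbourhood `U ⊇ σ(T)`:
an algebra homomorphism on functions holomorphic on `U`, sending `1 ↦ 1`, `id ↦ T`, and
satisfying the spectral mapping theorem for the spectrum and approximate point spectrum. -/
structure HoloCalcOn (T : X →L[ℂ] X) (U : Set ℂ) where
  isOpen : IsOpen U
  spec_subset : spectrum ℂ T ⊆ U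
  toFun : (ℂ → ℂ) → (X →L[ℂ] X)
  map_one : toFun (fun _ => 1) = 1
  map_id : toFun id = T
  map_add : ∀ f g : ℂ → ℂ, AnalyticOnNhd ℂ f U → AnalyticOnNhd ℂ g U →
    toFun (f + g) = toFun f + toFun g
  map_mul : ∀ f g : ℂ → ℂ, AnalyticOnNhd ℂ f U → AnalyticOnNhd ℂ g U →
    toFun (f * g) = toFun f * toFun g
  map_smul : ∀ (c : ℂ) (f : ℂ → ℂ), AnalyticOnNhd ℂ f U → toFun (c • f) = c • toFun f
  spec_map : ∀ f : ℂ → ℂ, AnalyticOnNhd ℂ f U → spectrum ℂ (toFun f) = f '' spectrum ℂ T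
  aspec_map : ∀ f : ℂ → ℂ, AnalyticOnNhd ℂ f U → aspectrum (toFun f) = f '' aspectrum T

/-- `f` is non-constant on each connected component of `σ(T)`. -/
def NonConstOnSpecComponents (T : X →L[ℂ] X) (f : ℂ → ℂ) : Prop :=
  ∀ z ∈ spectrum ℂ T, ∃ w ∈ connectedComponentIn (spectrum ℂ T) z, f w ≠ f z

/-- finite ascent of `A - λ` implies SVEP at `λ`. -/
theorem hasSVEPAt_of_finite_ascent (A : X →L[ℂ] X) (z : ℂ)
    (h : ascent (A - z • 1) ≠ ⊤) : HasSVEPAt A z := by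
  set S : X →L[ℂ] X := A - z • 1 with hS
  -- obtain the stabilization index
  obtain ⟨p, hp⟩ : {n : ℕ | LinearMap.ker (↑(S ^ n) : X →ₗ[ℂ] X) = LinearMap.ker (↑(S ^ (n + 1)) : X →ₗ[ℂ] X)}.Nonempty := by
    rw [Set.nonempty_iff_ne_empty]
    intro he
    exact h (by rw [ascent, he, Set.image_empty, sInf_empty])
  have hmono : ∀ n m : ℕ, LinearMap.ker (↑(S ^ n) : X →ₗ[ℂ] X) ≤ LinearMap.ker (↑(S ^ (n + m)) : X →ₗ[ℂ] X) := by
    intro n m x hx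
    have : (S ^ (n + m)) x = (S ^ m) ((S ^ n) x) := by
      rw [add_comm, pow_add]; rfl
    simp only [LinearMap.mem_ker, ContinuousLinearMap.coe_coe] at hx ⊢
    rw [this, hx, map_zero]
  have hker : ∀ m, LinearMap.ker (↑(S ^ (p + m)) : X →ₗ[ℂ] X) = LinearMap.ker (↑(S ^ p) : X →ₗ[ℂ] X) := by
    intro m
    induction m with
    | zero => rfl
    | succ m ih =>
      refine le_antisymm ?_ (by simpa using hmono p (m + 1))
      intro x hx
      rw [← ih]
      simp only [LinearMap.mem_ker, ContinuousLinearMap.coe_coe] at hx ⊢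
      have h1 : (S ^ (p + 1)) ((S ^ m) x) = 0 := by
        have : (S ^ (p + (m + 1))) x = (S ^ (p + 1)) ((S ^ m) x) := by
          rw [show p + (m + 1) = (p + 1) + m by ring, pow_add]; rfl
        rw [← this]; exact hx
      have h2 : (S ^ m) x ∈ LinearMap.ker (↑(S ^ (p + 1)) : X →ₗ[ℂ] X) := h1
      rw [← hp] at h2
      have : (S ^ (p + m)) x = (S ^ p) ((S ^ m) x) := by rw [pow_add]; rfl
      rw [this]
      exact h2
  intro r hr f hf hrel μ hμ
  have hz0 : z ∈ ball z r := mem_ball_self hr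
  have hrel' : ∀ w ∈ ball z r, S (f w) = (w - z) • f w := by
    intro w hw
    have h1 := sub_eq_zero.mp (hrel w hw)
    have h2 : S (f w) = A (f w) - z • f w := by
      simp [hS, ContinuousLinearMap.sub_apply, ContinuousLinearMap.smul_apply,
        ContinuousLinearMap.one_apply]
    rw [h2, h1, sub_smul]
  set F : ℕ → ℂ → X := fun k => (Function.swap dslope z)^[k] f with hF
  have hstep : ∀ k, F (k + 1) = dslope (F k) z := by
    intro k
    rw [hF]
    simp only [Function.iterate_succ_apply']
  -- the constant appearing in the recursion
  set c : ℕ → X := fun k => Nat.casesOn k 0 (fun m => F m z) with hc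
  have key : ∀ k, AnalyticOnNhd ℂ (F k) (ball z r) ∧
      ∀ w ∈ ball z r, S (F k w) = (w - z) • F k w + c k := by
    intro k
    induction k with
    | zero =>
      refine ⟨by simpa [hF] using hf, ?_⟩
      intro w hw
      simpa [hc, hF] using hrel' w hw
    | succ k ih =>
      obtain ⟨hFa, hFr⟩ := ih
      have hFa' : AnalyticOnNhd ℂ (F (k + 1)) (ball z r) := by
        rw [hstep k]
        intro w hw
        rcases eq_or_ne w z with rfl | hwz
        · obtain ⟨q, hq⟩ := hFa w hw
          exact hq.has_fpower_series_dslope_fslope.analyticAt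
        · have h1 : AnalyticAt ℂ (fun u => (u - z)⁻¹ • (F k u - F k z)) w := by
            refine AnalyticAt.smul ?_ ((hFa w hw).sub analyticAt_const)
            exact (analyticAt_id.sub analyticAt_const).inv (sub_ne_zero.mpr hwz)
          refine h1.congr ?_
          filter_upwards [isOpen_ne.mem_nhds hwz] with u hu
          rw [dslope_of_ne _ hu, slope_def_module]
      have hSz : S (F k z) = c k := by simpa using hFr z hz0
      refine ⟨hFa', ?_⟩
      have hne : ∀ w ∈ ball z r, w ≠ z →
          S (F (k + 1) w) = (w - z) • F (k + 1) w + c (k + 1) := by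
        intro w hw hwz
        have hds : F (k + 1) w = (w - z)⁻¹ • (F k w - F k z) := by
          rw [hstep k, dslope_of_ne _ hwz, slope_def_module]
        have hwz' : (w - z) ≠ 0 := sub_ne_zero.mpr hwz
        have hval : S (F (k + 1) w) = F k w := by
          rw [hds, map_smul, map_sub, hFr w hw, hSz]
          simp [smul_smul, inv_mul_cancel₀ hwz']
        have hsub : (w - z) • F (k + 1) w = F k w - F k z := by
          rw [hstep k, sub_smul_dslope]
        rw [hval, hsub]
        show F k w = F k w - F k z + F k z
        abel
      intro w hw
      rcases eq_or_ne w z with rfl | hwz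
      · -- take limits along the punctured neighborhood
        have hcont1 : ContinuousAt (fun u => S (F (k + 1) u)) w :=
          S.continuous.continuousAt.comp (hFa' w hw).continuousAt
        have hcont2 : ContinuousAt (fun u => (u - w) • F (k + 1) u + c (k + 1)) w := by
          exact (((continuous_id.sub continuous_const).continuousAt).smul
            (hFa' w hw).continuousAt).add continuousAt_const
        have hEq : (fun u => S (F (k + 1) u)) =ᶠ[𝓝[≠] w]
            (fun u => (u - w) • F (k + 1) u + c (k + 1)) := by
          filter_upwards [self_mem_nhdsWithin,
            mem_nhdsWithin_of_mem_nhds (isOpen_ball.mem_nhds hw)] with u hu hu2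
          exact hne u hu2 hu
        have l1 : Filter.Tendsto (fun u => S (F (k + 1) u)) (𝓝[≠] w)
            (𝓝 (S (F (k + 1) w))) := hcont1.continuousWithinAt.tendsto
        have l2 : Filter.Tendsto (fun u => S (F (k + 1) u)) (𝓝[≠] w)
            (𝓝 ((w - w) • F (k + 1) w + c (k + 1))) :=
          (hcont2.continuousWithinAt.tendsto).congr' hEq.symm
        exact tendsto_nhds_unique l1 l2
      · exact hne w hw hwz
  -- all Taylor coefficients vanish
  have hSa0 : S (F 0 z) = 0 := by simpa [hc] using (key 0).2 z hz0
  have hSa : ∀ k, S (F (k + 1) z) = F k z := by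
    intro k
    simpa [hc] using (key (k + 1)).2 z hz0
  have hkera : ∀ k, (S ^ (k + 1)) (F k z) = 0 := by
    intro k
    induction k with
    | zero => simpa using hSa0
    | succ k ih =>
      have : (S ^ (k + 2)) (F (k + 1) z) = (S ^ (k + 1)) (S (F (k + 1) z)) := by
        rw [pow_succ]; rfl
      rw [this, hSa k, ih]
  have hrange : ∀ k m, (S ^ m) (F (k + m) z) = F k z := by
    intro k m
    induction m with
    | zero => simp
    | succ m ih =>
      have h1 : (S ^ (m + 1)) (F (k + (m + 1)) z) = (S ^ m) (S (F (k + m + 1) z)) := by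
        rw [pow_succ]; rfl
      rw [h1, hSa (k + m), ih]
  have ha : ∀ k, F k z = 0 := by
    intro k
    have h1 : F k z = (S ^ (p + 1)) (F (k + (p + 1)) z) := (hrange k (p + 1)).symm
    have h2 : F (k + (p + 1)) z ∈ LinearMap.ker (↑(S ^ (k + (p + 1) + 1)) : X →ₗ[ℂ] X) := hkera (k + (p + 1))
    have h3 : F (k + (p + 1)) z ∈ LinearMap.ker (↑(S ^ (p + 1)) : X →ₗ[ℂ] X) := by
      have e1 : k + (p + 1) + 1 = (p + 1) + (k + 1) := by ring
      have e2 : LinearMap.ker (↑(S ^ ((p + 1) + (k + 1))) : X →ₗ[ℂ] X) = LinearMap.ker (↑(S ^ (p + 1)) : X →ₗ[ℂ] X) := by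
        calc LinearMap.ker (↑(S ^ ((p + 1) + (k + 1))) : X →ₗ[ℂ] X)
            = LinearMap.ker (↑(S ^ (p + (k + 2))) : X →ₗ[ℂ] X) := by norm_num [show (p+1)+(k+1) = p + (k+2) by ring]
          _ = LinearMap.ker (↑(S ^ p) : X →ₗ[ℂ] X) := hker (k + 2)
          _ = LinearMap.ker (↑(S ^ (p + 1)) : X →ₗ[ℂ] X) := (hker 1).symm
        
      rw [← e2, ← e1]
      exact h2
    rw [h1]
    exact LinearMap.mem_ker.mp h3
  -- f vanishes near z, hence on the ball by the identity theorem
  obtain ⟨q, hq⟩ := hf z hz0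
  have hq0 : q = 0 := by
    by_contra hq0
    exact hq.iterate_dslope_fslope_ne_zero hq0 (ha q.order)
  have hev : f =ᶠ[𝓝 z] 0 := hq.locally_zero_iff.mpr hq0
  exact hf.eqOn_zero_of_preconnected_of_eventuallyEq_zero
    ((convex_ball z r).isPreconnected) hz0 hev hμ

end Paper
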